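/- For every ω=(ω₂,ω₃)∈ℝ² and all constants φ̄, S̄⁺, S̄⁻∈ℝ, the time-independent functions φ(t,x′):=φ̄·cos(ω₂x₂+ω₃x₃) and U±(t,x):=(0,0,0,0,0,0,0, S̄±·cos(ω₂x₂+ω₃x₃)) solve the homogeneous constant-coefficient problem: they satisfy Â₀±∂_tU± ± Â₁∂₁U± + Â₂∂₂U± + Â₃∂₃U± = 0 in ℝ×ℝ³₊ and the boundary conditions [p]=0, [v]=0, [H₂]=0, [H₃]=0 and ∂_tφ − v₁⁺|_{x₁=0} = 0. In particular, if (φ̄,S̄⁺,S̄⁻)≠0 the homogeneous problem admits nonzero bounded solutions (neutral modes associated with the non-elliptic front symbol). -/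

import Mathlib

noncomputable section
open MeasureTheory

/-- Spatial points `x = (x₁,x₂,x₃)`. -/
abbrev X3 : Type := ℝ × ℝ × ℝ
/-- Space-time points `(t, x)`. -/
abbrev P3 : Type := ℝ × X3

/-- Directional derivative. -/
def D {E : Type*} [NormedAddCommGroup E] [NormedSpace ℝ E]
    (v : P3) (f : P3 → E) (p : P3) : E := fderiv ℝ f p v

def vIdx (i : Fin 3) : Fin 8 := ⟨1 + i.1, by omega⟩
def hIdx (i : Fin 3) : Fin 8 := ⟨4 + i.1, by omega⟩

/-- The unique symmetric 8×8 matrix `Â_j` with quadratic form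
`(Â_jU,U) = 2(v_j(p + (Ĥ,H)) − Ĥ_j(v,H))` on `U = (p,v,H,S)`. -/
def Ahat (Hh : Fin 3 → ℝ) (j : Fin 3) : Matrix (Fin 8) (Fin 8) ℝ :=
  Matrix.single 0 (vIdx j) 1 + Matrix.single (vIdx j) 0 1
    + ∑ k : Fin 3, (Matrix.single (vIdx j) (hIdx k) (Hh k)
        + Matrix.single (hIdx k) (vIdx j) (Hh k))
    - ∑ k : Fin 3, (Matrix.single (vIdx k) (hIdx k) (Hh j)
        + Matrix.single (hIdx k) (vIdx k) (Hh j))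

/-- `Â₀` for density `ρ̂` and sound speed `ĉ`. -/
def A0hat (ρ c : ℝ) : Matrix (Fin 8) (Fin 8) ℝ :=
  Matrix.diagonal ![1 / (ρ * c ^ 2), ρ, ρ, ρ, 1, 1, 1, 1]

/-- The neutral-mode entropy/front solution. -/
def Uosc (Sb ω₂ ω₃ : ℝ) : P3 → Fin 8 → ℝ := fun p i =>
  if i = 7 then Sb * Real.cos (ω₂ * p.2.2.1 + ω₃ * p.2.2.2) else 0

def φosc (φb ω₂ ω₃ : ℝ) : ℝ × ℝ × ℝ → ℝ := fun q =>
  φb * Real.cos (ω₂ * q.2.1 + ω₃ * q.2.2)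

def Lθ (ω₂ ω₃ : ℝ) : P3 →L[ℝ] ℝ :=
  ω₂ • ((ContinuousLinearMap.fst ℝ ℝ ℝ).comp
      ((ContinuousLinearMap.snd ℝ ℝ (ℝ × ℝ)).comp (ContinuousLinearMap.snd ℝ ℝ X3)))
  + ω₃ • ((ContinuousLinearMap.snd ℝ ℝ ℝ).comp
      ((ContinuousLinearMap.snd ℝ ℝ (ℝ × ℝ)).comp (ContinuousLinearMap.snd ℝ ℝ X3)))

lemma Lθ_apply (ω₂ ω₃ : ℝ) (v : P3) : Lθ ω₂ ω₃ v = ω₂ * v.2.2.1 + ω₃ * v.2.2.2 := by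
  simp [Lθ]

lemma hasFDerivAt_h (Sb ω₂ ω₃ : ℝ) (p : P3) :
    HasFDerivAt (fun q : P3 => Sb * Real.cos (ω₂ * q.2.2.1 + ω₃ * q.2.2.2))
      (Sb • ((-Real.sin (ω₂ * p.2.2.1 + ω₃ * p.2.2.2)) • Lθ ω₂ ω₃)) p := by
  have h1 : HasFDerivAt (fun q : P3 => ω₂ * q.2.2.1 + ω₃ * q.2.2.2) (Lθ ω₂ ω₃) p := by
    rw [show (fun q : P3 => ω₂ * q.2.2.1 + ω₃ * q.2.2.2) = ⇑(Lθ ω₂ ω₃) from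
      funext fun q => (Lθ_apply ω₂ ω₃ q).symm]
    exact (Lθ ω₂ ω₃).hasFDerivAt
  exact ((Real.hasDerivAt_cos (ω₂ * p.2.2.1 + ω₃ * p.2.2.2)).comp_hasFDerivAt p h1).const_mul Sb

lemma hasFDerivAt_Uosc (Sb ω₂ ω₃ : ℝ) (p : P3) :
    HasFDerivAt (Uosc Sb ω₂ ω₃)
      (ContinuousLinearMap.pi fun i : Fin 8 =>
        if i = 7 then Sb • ((-Real.sin (ω₂ * p.2.2.1 + ω₃ * p.2.2.2)) • Lθ ω₂ ω₃) else 0) p := by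
  rw [hasFDerivAt_pi']
  intro i
  by_cases hi : i = 7
  · subst hi
    simpa [Uosc] using hasFDerivAt_h Sb ω₂ ω₃ p
  · simp only [Uosc, hi, if_false, ContinuousLinearMap.proj_pi]
    exact hasFDerivAt_const 0 p

lemma D_Uosc (Sb ω₂ ω₃ : ℝ) (v p : P3) :
    D v (Uosc Sb ω₂ ω₃) p = Pi.single (7 : Fin 8)
      (Sb * (-Real.sin (ω₂ * p.2.2.1 + ω₃ * p.2.2.2) * (ω₂ * v.2.2.1 + ω₃ * v.2.2.2))) := by
  rw [D, (hasFDerivAt_Uosc Sb ω₂ ω₃ p).fderiv]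
  ext i
  by_cases hi : i = 7 <;> simp [hi, Pi.single_apply, Lθ_apply]

lemma Ahat_col7 (Hh : Fin 3 → ℝ) (j : Fin 3) (i : Fin 8) : Ahat Hh j i 7 = 0 := by
  have h7 : ∀ k : Fin 3, hIdx k ≠ 7 := by decide
  have v7 : ∀ k : Fin 3, vIdx k ≠ 7 := by decide
  simp [Ahat, Matrix.single, Matrix.sum_apply, Matrix.sub_apply, Matrix.add_apply,
    (h7 _), (v7 _), show (vIdx j : Fin 8) ≠ 7 from v7 j]

lemma Ahat_mulVec_single7 (Hh : Fin 3 → ℝ) (j : Fin 3) (x : ℝ) :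
    (Ahat Hh j).mulVec (Pi.single (7 : Fin 8) x) = 0 := by
  ext i
  simp [Matrix.mulVec_single, Ahat_col7]

lemma interior_eq (ρ c : ℝ) (Hh : Fin 3 → ℝ) (Sb ω₂ ω₃ : ℝ) (ε : ℝ) (p : P3) :
    (A0hat ρ c).mulVec (D (1, 0, 0, 0) (Uosc Sb ω₂ ω₃) p)
      + (ε • Ahat Hh 0).mulVec (D (0, 1, 0, 0) (Uosc Sb ω₂ ω₃) p)
      + (Ahat Hh 1).mulVec (D (0, 0, 1, 0) (Uosc Sb ω₂ ω₃) p)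
      + (Ahat Hh 2).mulVec (D (0, 0, 0, 1) (Uosc Sb ω₂ ω₃) p) = 0 := by
  rw [D_Uosc, D_Uosc, D_Uosc, D_Uosc]
  norm_num [Ahat_mulVec_single7, Matrix.mulVec_smul, Matrix.mulVec_zero,
    Matrix.mulVec_single, Ahat_col7]
  ext i
  simp [Ahat_col7]

def Lφ (ω₂ ω₃ : ℝ) : (ℝ × ℝ × ℝ) →L[ℝ] ℝ :=
  ω₂ • ((ContinuousLinearMap.fst ℝ ℝ ℝ).comp (ContinuousLinearMap.snd ℝ ℝ (ℝ × ℝ)))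
  + ω₃ • ((ContinuousLinearMap.snd ℝ ℝ ℝ).comp (ContinuousLinearMap.snd ℝ ℝ (ℝ × ℝ)))

lemma Lφ_apply (ω₂ ω₃ : ℝ) (v : ℝ × ℝ × ℝ) : Lφ ω₂ ω₃ v = ω₂ * v.2.1 + ω₃ * v.2.2 := by
  simp [Lφ]

lemma hasFDerivAt_φosc (φb ω₂ ω₃ : ℝ) (q : ℝ × ℝ × ℝ) :
    HasFDerivAt (φosc φb ω₂ ω₃)
      (φb • ((-Real.sin (ω₂ * q.2.1 + ω₃ * q.2.2)) • Lφ ω₂ ω₃)) q := by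
  have h1 : HasFDerivAt (fun v : ℝ × ℝ × ℝ => ω₂ * v.2.1 + ω₃ * v.2.2) (Lφ ω₂ ω₃) q := by
    rw [show (fun v : ℝ × ℝ × ℝ => ω₂ * v.2.1 + ω₃ * v.2.2) = ⇑(Lφ ω₂ ω₃) from
      funext fun v => (Lφ_apply ω₂ ω₃ v).symm]
    exact (Lφ ω₂ ω₃).hasFDerivAt
  exact ((Real.hasDerivAt_cos (ω₂ * q.2.1 + ω₃ * q.2.2)).comp_hasFDerivAt q h1).const_mul φb

lemma φ_lin (φb ω₂ ω₃ t x₂ x₃ : ℝ) :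
    fderiv ℝ (φosc φb ω₂ ω₃) (t, x₂, x₃) (1, 0, 0) = 0 := by
  rw [(hasFDerivAt_φosc φb ω₂ ω₃ (t, x₂, x₃)).fderiv]
  simp [Lφ_apply]

/-- **Neutral modes associated with the non-elliptic front symbol.**
For every `ω = (ω₂,ω₃)` and constants `φ̄, S̄⁺, S̄⁻`, the time-independent
functions `φ = φ̄cos(ω₂x₂+ω₃x₃)` and `U± = (0,…,0,S̄±cos(ω₂x₂+ω₃x₃))` solve
the homogeneous constant-coefficient problem; in particular if
`(φ̄,S̄⁺,S̄⁻) ≠ 0` the homogeneous problem admits nonzero bounded solutions. -/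
theorem neutral_modes
    (ρp ρm cp cm : ℝ) (hρp : 0 < ρp) (hρm : 0 < ρm) (hcp : 0 < cp) (hcm : 0 < cm)
    (Hh : Fin 3 → ℝ) (ω₂ ω₃ φb Sbp Sbm : ℝ) :
    -- interior equations in ℝ × ℝ³₊
    (∀ p : P3, 0 < p.2.1 →
      (A0hat ρp cp).mulVec (D (1, 0, 0, 0) (Uosc Sbp ω₂ ω₃) p)
        + (Ahat Hh 0).mulVec (D (0, 1, 0, 0) (Uosc Sbp ω₂ ω₃) p)
        + (Ahat Hh 1).mulVec (D (0, 0, 1, 0) (Uosc Sbp ω₂ ω₃) p)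
        + (Ahat Hh 2).mulVec (D (0, 0, 0, 1) (Uosc Sbp ω₂ ω₃) p) = 0) ∧
    (∀ p : P3, 0 < p.2.1 →
      (A0hat ρm cm).mulVec (D (1, 0, 0, 0) (Uosc Sbm ω₂ ω₃) p)
        - (Ahat Hh 0).mulVec (D (0, 1, 0, 0) (Uosc Sbm ω₂ ω₃) p)
        + (Ahat Hh 1).mulVec (D (0, 0, 1, 0) (Uosc Sbm ω₂ ω₃) p)
        + (Ahat Hh 2).mulVec (D (0, 0, 0, 1) (Uosc Sbm ω₂ ω₃) p) = 0) ∧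
    -- boundary conditions [p]=0, [v]=0, [H₂]=0, [H₃]=0, ∂ₜφ − v₁⁺|_{x₁=0} = 0
    (∀ t x₂ x₃ : ℝ,
      Uosc Sbp ω₂ ω₃ (t, 0, x₂, x₃) 0 = Uosc Sbm ω₂ ω₃ (t, 0, x₂, x₃) 0 ∧
      (∀ j : Fin 3,
        Uosc Sbp ω₂ ω₃ (t, 0, x₂, x₃) (vIdx j) =
          Uosc Sbm ω₂ ω₃ (t, 0, x₂, x₃) (vIdx j)) ∧
      Uosc Sbp ω₂ ω₃ (t, 0, x₂, x₃) (hIdx 1) = Uosc Sbm ω₂ ω₃ (t, 0, x₂, x₃) (hIdx 1) ∧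
      Uosc Sbp ω₂ ω₃ (t, 0, x₂, x₃) (hIdx 2) = Uosc Sbm ω₂ ω₃ (t, 0, x₂, x₃) (hIdx 2) ∧
      fderiv ℝ (φosc φb ω₂ ω₃) (t, x₂, x₃) (1, 0, 0)
        - Uosc Sbp ω₂ ω₃ (t, 0, x₂, x₃) (vIdx 0) = 0) ∧
    -- boundedness
    ((∀ q : ℝ × ℝ × ℝ, |φosc φb ω₂ ω₃ q| ≤ |φb|) ∧
      (∀ (p : P3) (i : Fin 8), |Uosc Sbp ω₂ ω₃ p i| ≤ |Sbp|) ∧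
      (∀ (p : P3) (i : Fin 8), |Uosc Sbm ω₂ ω₃ p i| ≤ |Sbm|)) ∧
    -- nontriviality
    (¬(φb = 0 ∧ Sbp = 0 ∧ Sbm = 0) →
      ¬((∀ q, φosc φb ω₂ ω₃ q = 0) ∧ (∀ p, Uosc Sbp ω₂ ω₃ p = 0) ∧
          (∀ p, Uosc Sbm ω₂ ω₃ p = 0))) := by
  
  refine ⟨?_, ?_, ?_, ?_, ?_⟩
  · intro p _
    have := interior_eq ρp cp Hh Sbp ω₂ ω₃ 1 p
    simpa using this
  · intro p _
    have := interior_eq ρm cm Hh Sbm ω₂ ω₃ (-1) p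
    -- (-1) • A mulVec w = - (A mulVec w)
    simpa [neg_smul, one_smul, Matrix.neg_mulVec, sub_eq_add_neg] using this
  · intro t x₂ x₃
    refine ⟨by simp [Uosc], fun j => ?_, by simp [Uosc, hIdx], by simp [Uosc, hIdx], ?_⟩
    · have : vIdx j ≠ 7 := by
        intro h; have := congrArg Fin.val h; simp [vIdx] at this; omega
      simp [Uosc, this]
    · have hv : (vIdx 0 : Fin 8) ≠ 7 := by decide
      have h1 : Uosc Sbp ω₂ ω₃ (t, 0, x₂, x₃) (vIdx 0) = 0 := by
        simp [Uosc, hv]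
      rw [h1, φ_lin, sub_zero]
  · refine ⟨fun q => ?_, fun p i => ?_, fun p i => ?_⟩
    · rw [φosc, abs_mul]
      calc |φb| * |Real.cos (ω₂ * q.2.1 + ω₃ * q.2.2)| ≤ |φb| * 1 :=
            mul_le_mul_of_nonneg_left (Real.abs_cos_le_one _) (abs_nonneg _)
        _ = |φb| := mul_one _
    · by_cases hi : i = 7
      · subst hi
        rw [show Uosc Sbp ω₂ ω₃ p 7 = Sbp * Real.cos (ω₂ * p.2.2.1 + ω₃ * p.2.2.2) from rfl, abs_mul]
        calc |Sbp| * |Real.cos (ω₂ * p.2.2.1 + ω₃ * p.2.2.2)| ≤ |Sbp| * 1 :=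
              mul_le_mul_of_nonneg_left (Real.abs_cos_le_one _) (abs_nonneg _)
          _ = |Sbp| := mul_one _
      · simp [Uosc, hi]
    · by_cases hi : i = 7
      · subst hi
        rw [show Uosc Sbm ω₂ ω₃ p 7 = Sbm * Real.cos (ω₂ * p.2.2.1 + ω₃ * p.2.2.2) from rfl, abs_mul]
        calc |Sbm| * |Real.cos (ω₂ * p.2.2.1 + ω₃ * p.2.2.2)| ≤ |Sbm| * 1 :=
              mul_le_mul_of_nonneg_left (Real.abs_cos_le_one _) (abs_nonneg _)
          _ = |Sbm| := mul_one _
      · simp [Uosc, hi]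
  · intro hne hall
    apply hne
    obtain ⟨hφ, hp, hm⟩ := hall
    refine ⟨?_, ?_, ?_⟩
    · have := hφ (0, 0, 0)
      simpa [φosc] using this
    · have := congrFun (hp (0, 0, 0, 0)) 7
      simpa [Uosc] using this
    · have := congrFun (hm (0, 0, 0, 0)) 7
      simpa [Uosc] using this



end
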